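/- In the gadget graph G_{x,y} constructed from (x,y) ∈ {0,1}^n × {0,1}^n, the 4n+3 oriented edges (each non-root vertex has out-degree exactly 1) form a directed spanning tree rooted at r if and only if ⟨x,y⟩ = Σᵢ xᵢyᵢ is odd. -/

import Mathlib

open Finset

/-- Vertices of the gadget graph `G_{x,y}` with `n+1` full gadgets: `a i j`, `b i j`
(`i ∈ [n+1]`, `j ∈ {0,1}`, i.e. first/second layer position), the final gadget vertices
`afin = a_{n+2,1}` and `bfin = b_{n+2,1}`, and the root `r`. -/
inductive GadgetV (n : ℕ) where
  | a (i : Fin (n + 1)) (j : Fin 2)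
  | b (i : Fin (n + 1)) (j : Fin 2)
  | afin
  | bfin
  | r
deriving DecidableEq

/-- The vertex `a_{i+1, j}` of the next gadget, where the nonexistent position
`a_{n+2,2}` is interpreted as `b_{n+2,1} = bfin`. -/
def nextA {n : ℕ} (i : Fin (n + 1)) (j : Fin 2) : GadgetV n :=
  if h : (i : ℕ) + 1 < n + 1 then .a ⟨i + 1, h⟩ j
  else if j = 0 then .afin else .bfin

/-- The out-map of the gadget graph `G_{x,y}`: every vertex other than the root has
out-degree exactly one (the root is sent to itself). If `x i = 0` then
`a_{i,1} → a_{i+1,1}`, `a_{i,2} → a_{i+1,2}`; if `x i = 1` then `a_{i,j} → b_{i,j}`;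
if `y i = 0` then `b_{i,j} → a_{i+1,j}`; if `y i = 1` then the layers are swapped;
finally `a_{n+2,1} → a_{1,1}` and `b_{n+2,1} → r`. -/
def gadgetStep {n : ℕ} (x y : Fin (n + 1) → Bool) : GadgetV n → GadgetV n
  | .a i j => if x i then .b i j else nextA i j
  | .b i j => if y i then nextA i (if j = 0 then 1 else 0) else nextA i j
  | .afin => .a 0 0
  | .bfin => .r
  | .r => .r

namespace GadgetAux

variable {n : ℕ} (x y : Fin (n + 1) → Bool)

def c (i : Fin (n + 1)) : Fin 2 := if x i = true ∧ y i = true then 1 else 0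

def S (t : ℕ) : Fin 2 :=
  ∑ k ∈ Finset.univ.filter (fun k : Fin (n + 1) => t ≤ (k : ℕ)), c x y k

lemma S_succ (t : ℕ) (ht : t < n + 1) :
    S x y t = c x y ⟨t, ht⟩ + S x y (t + 1) := by
  unfold S
  rw [show (Finset.univ.filter fun k : Fin (n+1) => t ≤ (k:ℕ)) =
      insert (⟨t, ht⟩ : Fin (n+1)) (Finset.univ.filter fun k : Fin (n+1) => t+1 ≤ (k:ℕ)) by
    ext k; simp [Fin.ext_iff]; omega]
  rw [Finset.sum_insert (by simp)]

lemma S_top (t : ℕ) (ht : n < t) : S x y t = 0 := by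
  unfold S
  rw [show (Finset.univ.filter fun k : Fin (n+1) => t ≤ (k:ℕ)) = ∅ by
    ext k; simp; omega]
  simp

lemma swap_eq : ∀ j : Fin 2, (if j = 0 then (1:Fin 2) else 0) = j + 1 := by decide

lemma step_a (i : Fin (n+1)) (j : Fin 2) :
    ∃ m, (gadgetStep x y)^[m] (.a i j) = nextA i (j + c x y i) := by
  cases hx : x i with
  | false =>
      exact ⟨1, by simp [gadgetStep, hx, c]⟩
  | true =>
      cases hy : y i with
      | false => exact ⟨2, by simp [gadgetStep, hx, hy, c]⟩
      | true => exact ⟨2, by simp [gadgetStep, hx, hy, c, swap_eq]⟩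

lemma reach_a : ∀ d i, i + d = n → ∀ (hi : i < n + 1) (j : Fin 2),
    ∃ m, (gadgetStep x y)^[m] (.a ⟨i, hi⟩ j) =
      nextA (⟨n, Nat.lt_succ_self n⟩ : Fin (n+1)) (j + S x y i) := by
  intro d
  induction d with
  | zero =>
      intro i hi0 hi j
      obtain rfl : n = i := by omega
      
      obtain ⟨m, hm⟩ := step_a x y ⟨n, hi⟩ j
      refine ⟨m, ?_⟩
      rw [hm, S_succ x y n hi, S_top x y (n+1) (by omega), add_zero]
  | succ d ih =>
      intro i hid hi j
      have hi1 : i + 1 < n + 1 := by omega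
      obtain ⟨m0, hm0⟩ := step_a x y ⟨i, hi⟩ j
      have hnext : nextA (⟨i, hi⟩ : Fin (n+1)) (j + c x y ⟨i, hi⟩) =
          .a ⟨i+1, hi1⟩ (j + c x y ⟨i, hi⟩) := by
        simp [nextA, hi1]
      obtain ⟨m1, hm1⟩ := ih (i+1) (by omega) hi1 (j + c x y ⟨i, hi⟩)
      refine ⟨m1 + m0, ?_⟩
      rw [Function.iterate_add_apply, hm0, hnext, hm1, S_succ x y i hi, add_assoc]

lemma nextA_n (j : Fin 2) :
    nextA (⟨n, Nat.lt_succ_self n⟩ : Fin (n+1)) j = if j = 0 then .afin else .bfin := by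
  simp [nextA]

lemma reach_r_of_odd (hS : S x y 0 = 1) :
    ∀ v : GadgetV n, ∃ k, (gadgetStep x y)^[k] v = .r := by
  have trans : ∀ (v w : GadgetV n), (∃ k, (gadgetStep x y)^[k] w = .r) →
      (∃ m, (gadgetStep x y)^[m] v = w) → ∃ k, (gadgetStep x y)^[k] v = .r := by
    rintro v w ⟨k, hk⟩ ⟨m, hm⟩
    exact ⟨k + m, by rw [Function.iterate_add_apply, hm, hk]⟩
  have hb : ∃ k, (gadgetStep x y)^[k] (.bfin : GadgetV n) = .r := ⟨1, rfl⟩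
  have ha00 : ∃ k, (gadgetStep x y)^[k] (.a (0 : Fin (n+1)) 0) = .r := by
    obtain ⟨m, hm⟩ := reach_a x y n 0 (by omega) (by omega) 0
    rw [zero_add, hS, nextA_n] at hm
    refine trans _ _ hb ⟨m, ?_⟩
    rw [show (.a (0 : Fin (n+1)) 0 : GadgetV n) = .a ⟨0, by omega⟩ 0 by rfl, hm]
    simp
  have hafin : ∃ k, (gadgetStep x y)^[k] (.afin : GadgetV n) = .r := by
    refine trans _ _ ha00 ⟨1, rfl⟩
  have haij : ∀ (i : Fin (n+1)) (j : Fin 2),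
      ∃ k, (gadgetStep x y)^[k] (.a i j) = .r := by
    intro i j
    obtain ⟨m, hm⟩ := reach_a x y (n - i.val) i.val (by omega) i.isLt j
    rw [nextA_n] at hm
    by_cases h0 : j + S x y i.val = 0
    · rw [if_pos h0] at hm
      exact trans _ _ hafin ⟨m, by rw [show (GadgetV.a i j) = .a ⟨i.val, i.isLt⟩ j by rfl, hm]⟩
    · rw [if_neg h0] at hm
      exact trans _ _ hb ⟨m, by rw [show (GadgetV.a i j) = .a ⟨i.val, i.isLt⟩ j by rfl, hm]⟩
  have hnext : ∀ (i : Fin (n+1)) (j : Fin 2),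
      ∃ k, (gadgetStep x y)^[k] (nextA i j) = .r := by
    intro i j
    unfold nextA
    split
    · apply haij
    · split
      · exact hafin
      · exact hb
  intro v
  cases v with
  | a i j => exact haij i j
  | b i j =>
      refine trans _ _ ?_ ⟨1, rfl⟩
      show ∃ k, (gadgetStep x y)^[k] (gadgetStep x y (.b i j)) = .r
      cases hy : y i with
      | false => simpa [gadgetStep, hy] using hnext i j
      | true => simpa [gadgetStep, hy] using hnext i (if j = 0 then 1 else 0)
  | afin => exact hafin
  | bfin => exact hb
  | r => exact ⟨0, rfl⟩

def phi : GadgetV n → Fin 2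
  | .a i j => j + S x y i.val
  | .b i j => j + (if y i = true then 1 else 0) + S x y (i.val + 1)
  | .afin => 0
  | .bfin => 1
  | .r => 1

lemma phi_nextA (i : Fin (n+1)) (j : Fin 2) :
    phi x y (nextA i j) = j + S x y (i.val + 1) := by
  unfold nextA
  split
  · rfl
  · rename_i h
    rw [S_top x y _ (by omega), add_zero]
    split
    · rename_i hj; simp [phi, hj]
    · rename_i hj
      have : j = 1 := by omega
      simp [phi, this]

lemma phi_step (hS : S x y 0 = 0) (v : GadgetV n) :
    phi x y (gadgetStep x y v) = phi x y v := by
  cases v with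
  | a i j =>
      show phi x y (if x i then .b i j else nextA i j) = _
      by_cases hx : x i = true
      · rw [if_pos (by simp [hx])]
        show _ = j + S x y i.val
        rw [S_succ x y i.val i.isLt]
        simp [phi, c, hx, add_assoc, Fin.eta]
      · rw [if_neg (by simp [hx]), phi_nextA]
        show _ = j + S x y i.val
        rw [S_succ x y i.val i.isLt]
        simp [phi, c, hx, Fin.eta]
  | b i j =>
      show phi x y (if y i then nextA i (if j = 0 then 1 else 0) else nextA i j) = _
      by_cases hy : y i = true
      · rw [if_pos (by simp [hy]), swap_eq, phi_nextA]
        simp [phi, hy, add_assoc, add_comm]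
      · rw [if_neg (by simp [hy]), phi_nextA]
        simp [phi, hy]
  | afin =>
      show phi x y (.a 0 0) = 0
      simp [phi, hS]
  | bfin => rfl
  | r => rfl

lemma phi_iterate (hS : S x y 0 = 0) (k : ℕ) (v : GadgetV n) :
    phi x y ((gadgetStep x y)^[k] v) = phi x y v := by
  induction k with
  | zero => rfl
  | succ k ih => rw [Function.iterate_succ_apply', phi_step x y hS, ih]

open Fin.CommRing in
lemma S_zero_eq :
    S x y 0 = ((Finset.univ.filter fun i => x i = true ∧ y i = true).card : Fin 2) := by
  unfold S c
  rw [show (Finset.univ.filter fun k : Fin (n+1) => 0 ≤ (k:ℕ)) = Finset.univ by simp]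
  rw [Finset.sum_boole]

open Fin.NatCast in
lemma S_iff_odd :
    S x y 0 = 1 ↔ Odd ((Finset.univ.filter fun i => x i = true ∧ y i = true).card) := by
  rw [S_zero_eq, Fin.ext_iff, Nat.odd_iff]
  simp [Fin.val_natCast]

end GadgetAux

/-- **Correctness of the gadget reduction.** The oriented edges of `G_{x,y}` form a
directed spanning tree rooted at `r` (i.e. every vertex reaches `r` by iterating the
out-map) if and only if `⟨x,y⟩ = Σᵢ xᵢyᵢ` is odd. -/
theorem gadget_spanning_tree_iff_inner_product_odd (n : ℕ)
    (x y : Fin (n + 1) → Bool) :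
    (∀ v : GadgetV n, ∃ k : ℕ, (gadgetStep x y)^[k] v = .r) ↔
      Odd ((Finset.univ.filter fun i => x i = true ∧ y i = true)).card := by
  rw [← GadgetAux.S_iff_odd x y]
  constructor
  · intro h
    by_contra hne
    have hS : GadgetAux.S x y 0 = 0 := by
      have h2 := (GadgetAux.S x y 0).isLt
      rw [Fin.ext_iff] at hne ⊢
      simp only [Fin.val_one, Fin.val_zero] at *
      omega
    obtain ⟨k, hk⟩ := h (.a 0 0)
    have := GadgetAux.phi_iterate x y hS k (.a 0 0)
    rw [hk] at this
    simp [GadgetAux.phi, hS] at this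
  · intro h
    exact GadgetAux.reach_r_of_odd x y h
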